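/- The wreath product A ≀ H = A^(H) ⋊ H has infinite conjugacy classes (is i.c.c.) whenever A is nontrivial and H is infinite. -/
import Mathlib


/-- The restricted direct product `A^(X)`: functions `X → A` with finite
(multiplicative) support, as a subgroup of the full direct product. -/
def FinSuppSubgroup (A X : Type*) [Group A] : Subgroup (X → A) where
  carrier := {f | (Function.mulSupport f).Finite}
  one_mem' := by simp [Function.mulSupport_one]
  mul_mem' := fun hf hg => Set.Finite.subset (hf.union hg) (Function.mulSupport_mul _ _)
  inv_mem' := fun hf => by simpa [Function.mulSupport_inv] using hf

/-- A group `F` acting on the index set `X` permutes the coordinates of the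
restricted direct product `A^(X)`. -/
def permAut (A : Type*) {F X : Type*} [Group A] [Group F] [MulAction F X] :
    F →* MulAut (FinSuppSubgroup A X) where
  toFun g :=
    { toFun := fun f => ⟨fun x => (f : X → A) (g⁻¹ • x),
        Set.Finite.preimage ((MulAction.injective (g⁻¹ : F)).injOn) f.2⟩
      invFun := fun f => ⟨fun x => (f : X → A) (g • x),
        Set.Finite.preimage ((MulAction.injective g).injOn) f.2⟩
      left_inv := fun f => by ext x; simp
      right_inv := fun f => by ext x; simp
      map_mul' := fun f f' => by ext x; simp [Subgroup.coe_mul] }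
  map_one' := by ext f x; simp
  map_mul' g g' := by ext f x; simp [mul_smul]

/-- The restricted wreath product `A ≀ H` (indexed by a set `X` on which `H`
acts; the classical wreath product is `X = H` with left translation). -/
def GenWreath (A F X : Type*) [Group A] [Group F] [MulAction F X] :=
  FinSuppSubgroup A X ⋊[permAut A] F

instance (A F X : Type*) [Group A] [Group F] [MulAction F X] : Group (GenWreath A F X) :=
  inferInstanceAs (Group (FinSuppSubgroup A X ⋊[permAut A] F))

/-- The restricted (regular) wreath product `A ≀ H = A^(H) ⋊ H`,
with `H` acting by left translation on the coordinates. -/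
def WreathProduct (A H : Type*) [Group A] [Group H] := GenWreath A H H

instance (A H : Type*) [Group A] [Group H] : Group (WreathProduct A H) :=
  inferInstanceAs (Group (GenWreath A H H))

/-- A group is i.c.c. if every nontrivial element has infinite conjugacy class. -/
def ICC (G : Type*) [Group G] : Prop := ∀ g : G, g ≠ 1 → {x : G | IsConj g x}.Infinite

open scoped Classical

/-- The "delta" function supported at `x` with value `a`. -/
noncomputable def deltaFn {A H : Type*} [Group A] [Group H] (a : A) (x : H) :
    FinSuppSubgroup A H :=
  ⟨fun y => if y = x then a else 1, by
    apply Set.Finite.subset (Set.finite_singleton x)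
    intro y hy
    rw [Function.mem_mulSupport] at hy
    by_contra hxy
    simp only [Set.mem_singleton_iff] at hxy
    exact hy (if_neg hxy)⟩

lemma deltaFn_apply {A H : Type*} [Group A] [Group H] (a : A) (x y : H) :
    (deltaFn a x : H → A) y = if y = x then a else 1 := by
  simp [deltaFn]

lemma deltaFn_inv_apply {A H : Type*} [Group A] [Group H] (a : A) (x y : H) :
    (((deltaFn a x)⁻¹ : FinSuppSubgroup A H) : H → A) y = if y = x then a⁻¹ else 1 := by
  rw [Subgroup.coe_inv, Pi.inv_apply, deltaFn_apply, apply_ite Inv.inv, inv_one]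

lemma permAut_apply {A H : Type*} [Group A] [Group H] (k : H) (f : FinSuppSubgroup A H)
    (y : H) : ((permAut A k f : FinSuppSubgroup A H) : H → A) y = (f : H → A) (k⁻¹ * y) := rfl

lemma infinite_image_of_finite_fibers {α β : Type*} {S : Set α} (hS : S.Infinite) (g : α → β)
    (hfib : ∀ b, {x ∈ S | g x = b}.Finite) : (g '' S).Infinite := by
  intro hfin
  apply hS
  have hsub : S ⊆ ⋃ b ∈ g '' S, {x ∈ S | g x = b} := fun x hx =>
    Set.mem_biUnion (Set.mem_image_of_mem g hx) ⟨hx, rfl⟩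
  exact Set.Finite.subset (Set.Finite.biUnion hfin fun b _ => hfib b) hsub

theorem genWreath_icc (A H : Type*) [Group A] [Group H] [Nontrivial A] [Infinite H] :
    ∀ w : FinSuppSubgroup A H ⋊[permAut A] H, w ≠ 1 →
      {x : FinSuppSubgroup A H ⋊[permAut A] H | IsConj w x}.Infinite := by
  obtain ⟨a, ha⟩ := exists_ne (1 : A)
  rintro ⟨f, h⟩ hw
  by_cases hh : h = 1
  · -- `h = 1`, so `f ≠ 1`; conjugate by `(1, k)` for `k : H`.
    subst hh
    have hf : f ≠ 1 := by
      intro hf1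
      apply hw
      rw [hf1]
      ext <;> simp
    obtain ⟨x₀, hx₀⟩ : ∃ x₀, (f : H → A) x₀ ≠ 1 := by
      by_contra hc
      push_neg at hc
      exact hf (Subtype.ext (funext hc))
    set g : H → FinSuppSubgroup A H ⋊[permAut A] H :=
      fun k => ⟨permAut A k f, 1⟩ with hg
    have hconj : ∀ k : H, IsConj (⟨f, 1⟩ : FinSuppSubgroup A H ⋊[permAut A] H) (g k) := by
      intro k
      rw [isConj_iff]
      refine ⟨⟨1, k⟩, ?_⟩
      ext <;>
        simp [hg, SemidirectProduct.mul_left, SemidirectProduct.mul_right,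
          SemidirectProduct.inv_left, SemidirectProduct.inv_right]
    have hfib : ∀ b, {k : H | k ∈ Set.univ ∧ g k = b}.Finite := by
      intro b
      by_cases hne : {k : H | k ∈ Set.univ ∧ g k = b}.Nonempty
      · obtain ⟨k₀, -, hk₀⟩ := hne
        apply Set.Finite.subset (Set.Finite.image (fun s => k₀ * x₀ * s⁻¹) f.2)
        rintro k ⟨-, hk⟩
        have heq : permAut A k f = permAut A k₀ f :=
          congrArg SemidirectProduct.left (hk.trans hk₀.symm)
        have heval : (f : H → A) (k⁻¹ * (k₀ * x₀)) = (f : H → A) (k₀⁻¹ * (k₀ * x₀)) := by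
          have h1 := congrFun (congrArg Subtype.val heq) (k₀ * x₀)
          rwa [permAut_apply, permAut_apply] at h1
        rw [inv_mul_cancel_left] at heval
        refine ⟨k⁻¹ * (k₀ * x₀), ?_, ?_⟩
        · rw [Function.mem_mulSupport, heval]; exact hx₀
        · group
      · rw [Set.not_nonempty_iff_eq_empty] at hne
        rw [hne]; exact Set.finite_empty
    have himg : (g '' Set.univ).Infinite :=
      infinite_image_of_finite_fibers Set.infinite_univ g hfib
    apply Set.Infinite.mono _ himg
    rintro w ⟨k, -, rfl⟩
    exact hconj k
  · -- `h ≠ 1`; conjugate by `(δ_x a, 1)` for `x` outside the support of `f`.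
    set S : Set H := {x : H | (f : H → A) x = 1} with hS
    have hSinf : S.Infinite := by
      have hSc : S = (Function.mulSupport (f : H → A))ᶜ := by
        ext x; simp [hS, Function.mem_mulSupport]
      rw [hSc]
      exact Set.Finite.infinite_compl f.2
    set L : H → FinSuppSubgroup A H :=
      fun x => deltaFn a x * f * permAut A h (deltaFn a x)⁻¹ with hL
    set g : H → FinSuppSubgroup A H ⋊[permAut A] H := fun x => ⟨L x, h⟩ with hg
    have hLval : ∀ x y : H, ((L x : FinSuppSubgroup A H) : H → A) y =
        (if y = x then a else 1) * (f : H → A) y * (if h⁻¹ * y = x then a⁻¹ else 1) := by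
      intro x y
      simp only [hL, Subgroup.coe_mul, Pi.mul_apply, deltaFn_apply, permAut_apply,
        deltaFn_inv_apply]
    have hne : ∀ y : H, h⁻¹ * y ≠ y := by
      intro y hy
      apply hh
      have h1 : h⁻¹ * y = 1 * y := by rw [hy, one_mul]
      have h2 : h⁻¹ = 1 := mul_right_cancel h1
      rwa [inv_eq_one] at h2
    have hconj : ∀ x : H, IsConj (⟨f, h⟩ : FinSuppSubgroup A H ⋊[permAut A] H) (g x) := by
      intro x
      rw [isConj_iff]
      refine ⟨⟨deltaFn a x, 1⟩, ?_⟩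
      ext <;>
        simp [hg, hL, SemidirectProduct.mul_left, SemidirectProduct.mul_right,
          SemidirectProduct.inv_left, SemidirectProduct.inv_right]
    have hclaim : ∀ x ∈ S, ∀ x' ∈ S, x ≠ x' → L x = L x' → x' = h⁻¹ * x := by
      intro x hx x' _ hxx' hLL
      simp only [hS, Set.mem_setOf_eq] at hx
      have hval := congrFun (congrArg Subtype.val hLL) x
      by_cases hcase : h⁻¹ * x = x'
      · exact hcase.symm
      · exfalso
        rw [hLval, hLval, if_pos rfl, if_neg (hne x), if_neg hxx', if_neg hcase, hx] at hval
        simp only [mul_one, one_mul] at hval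
        exact ha hval
    have hfib : ∀ b, {x ∈ S | g x = b}.Finite := by
      intro b
      by_cases hne2 : {x ∈ S | g x = b}.Nonempty
      · obtain ⟨x₁, hx₁S, hx₁⟩ := hne2
        apply Set.Finite.subset ((Set.finite_singleton (h⁻¹ * x₁)).insert x₁)
        rintro x ⟨hxS, hx⟩
        by_cases hxx : x = x₁
        · exact Set.mem_insert_iff.2 (Or.inl hxx)
        · have hLL : L x₁ = L x := congrArg SemidirectProduct.left (hx₁.trans hx.symm)
          have := hclaim x₁ hx₁S x hxS (fun hc => hxx hc.symm) hLL
          exact Set.mem_insert_iff.2 (Or.inr this)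
      · rw [Set.not_nonempty_iff_eq_empty] at hne2
        rw [hne2]; exact Set.finite_empty
    have himg : (g '' S).Infinite := infinite_image_of_finite_fibers hSinf g hfib
    apply Set.Infinite.mono _ himg
    rintro w ⟨x, -, rfl⟩
    exact hconj x

/-- the restricted wreath product `A ≀ H = A^(H) ⋊ H` is i.c.c.
whenever `A` is nontrivial and `H` is infinite. -/
theorem wreathProduct_icc (A H : Type*) [Group A] [Group H]
    [Nontrivial A] [Infinite H] : ICC (WreathProduct A H) := by
  intro w hw
  exact genWreath_icc A H w hw
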